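/- arXiv:2506.18863 — 2 statements merged into one kernel-verified Lean document; each statement's English description precedes it below -/
import Mathlib

section
/- Let y ∈ ℂ^m, x ∈ ℂ^n be random vectors and A ∈ ℂ^{m×n} a random matrix, all with finite second moments, such that y, A, x are mutually independent and the columns a_1,…,a_n of A are mutually independent. Let F ∈ ℂ^{m×m} be a deterministic Hermitian matrix. Then E[(y−Ax)^H F (y−Ax)] = (⟨y⟩−⟨A⟩⟨x⟩)^H F (⟨y⟩−⟨A⟩⟨x⟩) + ⟨x⟩^H B ⟨x⟩ + Tr(F Σ_y) + Tr(Σ_x B) + Tr(Σ_x ⟨A⟩^H F ⟨A⟩), where B = diag(Tr(F Σ_{a_1}),…,Tr(F Σ_{a_n})) and ⟨A⟩ is the matrix whose i-th column is ⟨a_i⟩. -/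
open MeasureTheory Matrix ProbabilityTheory

open ComplexConjugate
open scoped ENNReal

/-- The (entrywise) mean of a complex random vector. -/
noncomputable def vmean {Ω : Type*} [MeasurableSpace Ω] (μ : Measure Ω) {m : ℕ}
    (v : Ω → Fin m → ℂ) : Fin m → ℂ :=
  fun i => ∫ ω, v ω i ∂μ

/-- The covariance matrix `E[(v - ⟨v⟩)(v - ⟨v⟩)ᴴ]` of a complex random vector. -/
noncomputable def vcov {Ω : Type*} [MeasurableSpace Ω] (μ : Measure Ω) {m : ℕ}
    (v : Ω → Fin m → ℂ) : Matrix (Fin m) (Fin m) ℂ :=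
  Matrix.of fun i j => ∫ ω, (v ω i - vmean μ v i) * star (v ω j - vmean μ v j) ∂μ

/-- Index type for the joint family consisting of `y`, `x`, and the columns of `A`. -/
inductive JIdx (n : ℕ) where
  | y : JIdx n
  | x : JIdx n
  | col (j : Fin n) : JIdx n

/-- Codomain of each member of the joint family. -/
def JType (m n : ℕ) : JIdx n → Type
  | .y => Fin m → ℂ
  | .x => Fin n → ℂ
  | .col _ => Fin m → ℂ

/-- The measurable space structure on each codomain. -/
noncomputable def JMeas (m n : ℕ) : ∀ i : JIdx n, MeasurableSpace (JType m n i)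
  | .y => (inferInstance : MeasurableSpace (Fin m → ℂ))
  | .x => (inferInstance : MeasurableSpace (Fin n → ℂ))
  | .col _ => (inferInstance : MeasurableSpace (Fin m → ℂ))

/-- The joint family `(y, x, a_1, …, a_n)`, where `a_j` is the `j`-th column of `A`.
Mutual independence of this family is equivalent to the requirement that `y`, `A`, `x`
are mutually independent and that the columns of `A` are mutually independent. -/
def JFam {Ω : Type*} {m n : ℕ} (y : Ω → Fin m → ℂ) (A : Ω → Matrix (Fin m) (Fin n) ℂ)
    (x : Ω → Fin n → ℂ) : ∀ i : JIdx n, Ω → JType m n i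
  | .y => y
  | .x => x
  | .col j => fun ω k => A ω k j

section Aux
variable {Ω : Type*} [MeasurableSpace Ω] {μ : Measure Ω}

/-- Mutual independence is preserved under a.e. modification. -/
lemma iIndepFun_ae_eq {ι : Type*} {β : ι → Type*} {M : ∀ i, MeasurableSpace (β i)}
    {f g : ∀ i, Ω → β i} (h : iIndepFun (m := M) f μ) (hfg : ∀ i, f i =ᵐ[μ] g i) :
    iIndepFun (m := M) g μ := by
  rw [iIndepFun_iff_measure_inter_preimage_eq_mul] at h ⊢
  intro S sets hmeas
  have hall : ∀ᵐ ω ∂μ, ∀ i ∈ S, f i ω = g i ω :=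
    (Filter.eventually_all_finset S).2 fun i _ => hfg i
  have h1 : μ (⋂ i ∈ S, g i ⁻¹' sets i) = μ (⋂ i ∈ S, f i ⁻¹' sets i) := by
    apply measure_congr
    rw [Filter.eventuallyEq_set]
    filter_upwards [hall] with ω hω
    simp only [Set.mem_iInter, Set.mem_preimage]
    constructor
    · intro hh i hi; rw [hω i hi]; exact hh i hi
    · intro hh i hi; rw [← hω i hi]; exact hh i hi
  rw [h1, h S hmeas]
  refine Finset.prod_congr rfl fun i hi => ?_
  apply measure_congr
  rw [Filter.eventuallyEq_set]
  filter_upwards [hfg i] with ω hω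
  simp only [Set.mem_preimage, hω]

lemma memLp_star {f : Ω → ℂ} (hf : MemLp f 2 μ) : MemLp (fun ω => star (f ω)) 2 μ := by
  refine MemLp.of_le_mul (c := 1) hf
    (continuous_star.comp_aestronglyMeasurable hf.1)
    (Filter.Eventually.of_forall fun ω => by simp)

lemma integrable_mul₂ {f g : Ω → ℂ} (hf : MemLp f 2 μ) (hg : MemLp g 2 μ) :
    Integrable (fun ω => f ω * g ω) μ := by
  have h121 : (1 : ℝ≥0∞) / 1 = 1 / 2 + 1 / 2 := by
    rw [ENNReal.add_halves]; norm_num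
  have h : MemLp (f • g) 1 μ := hg.smul hf
  rw [memLp_one_iff_integrable] at h
  exact h

lemma indep_integral_mul {f g : Ω → ℂ} (h : IndepFun f g μ) (hf : Integrable f μ)
    (hg : Integrable g μ) :
    ∫ ω, f ω * g ω ∂μ = (∫ ω, f ω ∂μ) * ∫ ω, g ω ∂μ := by
  have hfg : Integrable (fun ω => f ω * g ω) μ := h.integrable_mul hf hg
  have hre : ∀ u : Ω → ℂ, Integrable u μ → (∫ ω, u ω ∂μ).re = ∫ ω, (u ω).re ∂μ := by
    intro u hu; simpa using (integral_re hu).symm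
  have him : ∀ u : Ω → ℂ, Integrable u μ → (∫ ω, u ω ∂μ).im = ∫ ω, (u ω).im ∂μ := by
    intro u hu; simpa using (integral_im hu).symm
  have hRR : IndepFun (fun ω => (f ω).re) (fun ω => (g ω).re) μ :=
    h.comp Complex.measurable_re Complex.measurable_re
  have hRI : IndepFun (fun ω => (f ω).re) (fun ω => (g ω).im) μ :=
    h.comp Complex.measurable_re Complex.measurable_im
  have hIR : IndepFun (fun ω => (f ω).im) (fun ω => (g ω).re) μ :=
    h.comp Complex.measurable_im Complex.measurable_re
  have hII : IndepFun (fun ω => (f ω).im) (fun ω => (g ω).im) μ :=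
    h.comp Complex.measurable_im Complex.measurable_im
  have hfr : Integrable (fun ω => (f ω).re) μ := hf.re
  have hfi : Integrable (fun ω => (f ω).im) μ := hf.im
  have hgr : Integrable (fun ω => (g ω).re) μ := hg.re
  have hgi : Integrable (fun ω => (g ω).im) μ := hg.im
  have iRR : Integrable (fun ω => (f ω).re * (g ω).re) μ := hRR.integrable_mul hfr hgr
  have iRI : Integrable (fun ω => (f ω).re * (g ω).im) μ := hRI.integrable_mul hfr hgi
  have iIR : Integrable (fun ω => (f ω).im * (g ω).re) μ := hIR.integrable_mul hfi hgr
  have iII : Integrable (fun ω => (f ω).im * (g ω).im) μ := hII.integrable_mul hfi hgi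
  have eRR : ∫ ω, (f ω).re * (g ω).re ∂μ = (∫ ω, (f ω).re ∂μ) * ∫ ω, (g ω).re ∂μ :=
    hRR.integral_mul_eq_mul_integral hfr.1 hgr.1
  have eRI : ∫ ω, (f ω).re * (g ω).im ∂μ = (∫ ω, (f ω).re ∂μ) * ∫ ω, (g ω).im ∂μ :=
    hRI.integral_mul_eq_mul_integral hfr.1 hgi.1
  have eIR : ∫ ω, (f ω).im * (g ω).re ∂μ = (∫ ω, (f ω).im ∂μ) * ∫ ω, (g ω).re ∂μ :=
    hIR.integral_mul_eq_mul_integral hfi.1 hgr.1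
  have eII : ∫ ω, (f ω).im * (g ω).im ∂μ = (∫ ω, (f ω).im ∂μ) * ∫ ω, (g ω).im ∂μ :=
    hII.integral_mul_eq_mul_integral hfi.1 hgi.1
  apply Complex.ext
  · rw [hre _ hfg, Complex.mul_re, hre f hf, him f hf, hre g hg, him g hg]
    simp only [Complex.mul_re]
    rw [integral_sub iRR iII, eRR, eII]
  · rw [him _ hfg, Complex.mul_im, hre f hf, him f hf, hre g hg, him g hg]
    simp only [Complex.mul_im]
    rw [integral_add iRI iIR, eRI, eIR]

lemma integral_mul_star_sub [IsProbabilityMeasure μ] {f g : Ω → ℂ}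
    (hf : MemLp f 2 μ) (hg : MemLp g 2 μ) :
    ∫ ω, (f ω - ∫ ω', f ω' ∂μ) * star (g ω - ∫ ω', g ω' ∂μ) ∂μ
      = ∫ ω, f ω * star (g ω) ∂μ - (∫ ω, f ω ∂μ) * star (∫ ω, g ω ∂μ) := by
  set c := ∫ ω', f ω' ∂μ with hc
  set d := ∫ ω', g ω' ∂μ with hd
  have hfi : Integrable f μ := hf.integrable one_le_two
  have hgi : Integrable g μ := hg.integrable one_le_two
  have hsg : Integrable (fun ω => star (g ω)) μ := (memLp_star hg).integrable one_le_two
  have h1 : Integrable (fun ω => f ω * star (g ω)) μ := integrable_mul₂ hf (memLp_star hg)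
  have key : (fun ω => (f ω - c) * star (g ω - d))
      = fun ω => (f ω * star (g ω) - star d * f ω) - (c * star (g ω) - c * star d) := by
    funext ω; rw [star_sub]; ring
  have hsd : ∫ ω, star (g ω) ∂μ = star d := integral_conj (μ := μ) (f := g)
  have hA : Integrable (fun ω => f ω * star (g ω) - star d * f ω) μ :=
    h1.sub (hfi.const_mul (star d))
  have hB : Integrable (fun ω => c * star (g ω) - c * star d) μ :=
    (hsg.const_mul c).sub (integrable_const _)
  rw [key, integral_sub hA hB,
    integral_sub h1 (hfi.const_mul (star d)),
    integral_sub (hsg.const_mul c) (integrable_const _),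
    integral_const_mul, integral_const_mul, integral_const, hsd, ← hc]
  simp [measure_univ]
  ring

lemma vcov_apply_eq [IsProbabilityMeasure μ] {p : ℕ} {v : Ω → Fin p → ℂ}
    (hv : ∀ i, MemLp (fun ω => v ω i) 2 μ) (i j : Fin p) :
    vcov μ v i j = ∫ ω, v ω i * star (v ω j) ∂μ - vmean μ v i * star (vmean μ v j) :=
  integral_mul_star_sub (hv i) (hv j)

end Aux


lemma alg_identity {m n : ℕ} (F Cy : Matrix (Fin m) (Fin m) ℂ) (Cx : Matrix (Fin n) (Fin n) ℂ)
    (CK : Fin n → Matrix (Fin m) (Fin m) ℂ) (Ab : Matrix (Fin m) (Fin n) ℂ)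
    (my : Fin m → ℂ) (mx : Fin n → ℂ) :
    ∑ i, ∑ j, F i j * ((Cy j i + star (my i) * my j)
        - (∑ l, star (my i) * (Ab j l * mx l))
        - (∑ k, (star (Ab i k) * star (mx k)) * my j)
        + ∑ k, ∑ l, ((if k = l then CK k j i else 0) + star (Ab i k) * Ab j l)
            * (Cx l k + star (mx k) * mx l))
    = star (my - Ab.mulVec mx) ⬝ᵥ F.mulVec (my - Ab.mulVec mx)
      + star mx ⬝ᵥ (Matrix.diagonal fun k => (F * CK k).trace).mulVec mx
      + (F * Cy).trace + (Cx * Matrix.diagonal fun k => (F * CK k).trace).trace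
      + (Cx * (Abᴴ * F * Ab)).trace := by
  classical
  have htr : ∀ (G C : Matrix (Fin m) (Fin m) ℂ),
      (G * C).trace = ∑ i, ∑ j, G i j * C j i := by
    intro G C; simp [Matrix.trace, Matrix.diag, Matrix.mul_apply]
  have hswap : ∀ (a : ℂ) (t : Fin m → Fin m → ℂ),
      star a * ((∑ i, ∑ j, t i j) * a) = ∑ i, ∑ j, t i j * (star a * a) := by
    intro a t
    rw [Finset.sum_mul, Finset.mul_sum]
    refine Finset.sum_congr rfl fun i _ => ?_
    rw [Finset.sum_mul, Finset.mul_sum]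
    exact Finset.sum_congr rfl fun j _ => by ring
  -- Group 1
  have hG1 : star (my - Ab.mulVec mx) ⬝ᵥ F.mulVec (my - Ab.mulVec mx)
      = ∑ i, ∑ j, F i j * (star (my i - ∑ k, Ab i k * mx k) * (my j - ∑ l, Ab j l * mx l)) := by
    simp only [dotProduct, mulVec, Pi.star_apply, Pi.sub_apply]
    refine Finset.sum_congr rfl fun i _ => ?_
    rw [Finset.mul_sum]
    exact Finset.sum_congr rfl fun j _ => by ring
  -- Group 2
  have hG2 : star mx ⬝ᵥ (Matrix.diagonal fun k => (F * CK k).trace).mulVec mx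
      = ∑ i, ∑ j, F i j * ∑ k, CK k j i * (star (mx k) * mx k) := by
    simp only [dotProduct, Matrix.mulVec_diagonal, Pi.star_apply]
    have h0 : ∀ k : Fin n, star (mx k) * ((F * CK k).trace * mx k)
        = ∑ i, ∑ j, F i j * CK k j i * (star (mx k) * mx k) := by
      intro k; rw [htr F (CK k)]; exact hswap (mx k) _
    rw [Finset.sum_congr rfl fun k _ => h0 k, Finset.sum_comm]
    refine Finset.sum_congr rfl fun i _ => ?_
    rw [Finset.sum_comm]
    refine Finset.sum_congr rfl fun j _ => ?_
    rw [Finset.mul_sum]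
    exact Finset.sum_congr rfl fun k _ => by ring
  -- Group 3
  have hG3 : (F * Cy).trace = ∑ i, ∑ j, F i j * Cy j i := htr F Cy
  -- Group 4
  have hG4 : (Cx * Matrix.diagonal fun k => (F * CK k).trace).trace
      = ∑ i, ∑ j, F i j * ∑ k, CK k j i * Cx k k := by
    have h1 : (Cx * Matrix.diagonal fun k => (F * CK k).trace).trace
        = ∑ k, Cx k k * (F * CK k).trace := by
      simp [Matrix.trace, Matrix.diag, Matrix.mul_diagonal]
    rw [h1]
    have h2 : ∀ k : Fin n, Cx k k * (F * CK k).trace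
        = ∑ i, ∑ j, F i j * CK k j i * Cx k k := by
      intro k; rw [htr F (CK k), Finset.mul_sum]
      refine Finset.sum_congr rfl fun i _ => ?_
      rw [Finset.mul_sum]
      exact Finset.sum_congr rfl fun j _ => by ring
    rw [Finset.sum_congr rfl fun k _ => h2 k, Finset.sum_comm]
    refine Finset.sum_congr rfl fun i _ => ?_
    rw [Finset.sum_comm]
    refine Finset.sum_congr rfl fun j _ => ?_
    rw [Finset.mul_sum]
    exact Finset.sum_congr rfl fun k _ => by ring
  -- Group 5
  have hABA : ∀ (k l : Fin n), (Abᴴ * F * Ab) k l = ∑ i, ∑ j, star (Ab i k) * F i j * Ab j l := by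
    intro k l
    rw [Matrix.mul_apply]
    have h0 : ∀ j, (Abᴴ * F) k j * Ab j l = ∑ i, star (Ab i k) * F i j * Ab j l := by
      intro j
      rw [Matrix.mul_apply, Finset.sum_mul]
      exact Finset.sum_congr rfl fun i _ => by simp [Matrix.conjTranspose_apply]
    rw [Finset.sum_congr rfl fun j _ => h0 j, Finset.sum_comm]
  have hG5 : (Cx * (Abᴴ * F * Ab)).trace
      = ∑ i, ∑ j, F i j * ∑ k, ∑ l, Cx l k * (star (Ab i k) * Ab j l) := by
    have h1 : (Cx * (Abᴴ * F * Ab)).trace = ∑ l, ∑ k, Cx l k * (Abᴴ * F * Ab) k l := by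
      simp [Matrix.trace, Matrix.diag, Matrix.mul_apply]
    rw [h1]
    have h2 : ∀ l k : Fin n, Cx l k * (Abᴴ * F * Ab) k l
        = ∑ i, ∑ j, F i j * (Cx l k * (star (Ab i k) * Ab j l)) := by
      intro l k
      rw [hABA k l, Finset.mul_sum]
      refine Finset.sum_congr rfl fun i _ => ?_
      rw [Finset.mul_sum]
      exact Finset.sum_congr rfl fun j _ => by ring
    rw [Finset.sum_congr rfl fun l _ => Finset.sum_congr rfl fun k _ => h2 l k]
    -- now : ∑ l ∑ k ∑ i ∑ j → ∑ i ∑ j ∑ k ∑ l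
    have s1 : ∀ l : Fin n, ∑ k : Fin n, ∑ i : Fin m, ∑ j : Fin m,
          F i j * (Cx l k * (star (Ab i k) * Ab j l))
        = ∑ i : Fin m, ∑ j : Fin m, ∑ k : Fin n,
          F i j * (Cx l k * (star (Ab i k) * Ab j l)) := by
      intro l
      rw [Finset.sum_comm]
      exact Finset.sum_congr rfl fun i _ => Finset.sum_comm
    rw [Finset.sum_congr rfl fun l _ => s1 l, Finset.sum_comm]
    refine Finset.sum_congr rfl fun i _ => ?_
    rw [Finset.sum_comm]
    refine Finset.sum_congr rfl fun j _ => ?_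
    rw [Finset.sum_comm, Finset.mul_sum]
    refine Finset.sum_congr rfl fun k _ => ?_
    rw [Finset.mul_sum]
  -- assemble
  rw [hG1, hG2, hG3, hG4, hG5]
  have merge : ∀ (f g : Fin m → Fin m → ℂ),
      ((∑ i, ∑ j, f i j) + ∑ i, ∑ j, g i j) = ∑ i, ∑ j, (f i j + g i j) := by
    intro f g; rw [← Finset.sum_add_distrib]
    exact Finset.sum_congr rfl fun i _ => by rw [← Finset.sum_add_distrib]
  rw [merge, merge, merge, merge]
  refine Finset.sum_congr rfl fun i _ => Finset.sum_congr rfl fun j _ => ?_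
  -- scalar identity
  have hstar : star (my i - ∑ k, Ab i k * mx k)
      = star (my i) - ∑ k, star (Ab i k) * star (mx k) := by
    rw [star_sub, star_sum]
    congr 1
    exact Finset.sum_congr rfl fun k _ => star_mul' _ _
  have expand : ∀ k l : Fin n,
      ((if k = l then CK k j i else 0) + star (Ab i k) * Ab j l)
          * (Cx l k + star (mx k) * mx l)
      = ((if k = l then CK k j i * Cx l k else 0)
          + (if k = l then CK k j i * (star (mx k) * mx l) else 0))
        + (Cx l k * (star (Ab i k) * Ab j l)
          + (star (Ab i k) * star (mx k)) * (Ab j l * mx l)) := by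
    intro k l; split_ifs with h <;> ring
  have hquad : ∑ k, ∑ l, ((if k = l then CK k j i else 0) + star (Ab i k) * Ab j l)
          * (Cx l k + star (mx k) * mx l)
      = ((∑ k, CK k j i * Cx k k) + ∑ k, CK k j i * (star (mx k) * mx k))
        + ((∑ k, ∑ l, Cx l k * (star (Ab i k) * Ab j l))
          + (∑ k, star (Ab i k) * star (mx k)) * ∑ l, Ab j l * mx l) := by
    simp only [expand, Finset.sum_add_distrib, Finset.sum_ite_eq, Finset.mem_univ, if_true]
    rw [Finset.sum_mul_sum]
  rw [hquad, hstar, ← Finset.mul_sum, ← Finset.sum_mul]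
  ring

set_option maxHeartbeats 2000000 in
theorem stmt0_aux {Ω : Type*} [MeasurableSpace Ω] (μ : Measure Ω) [IsProbabilityMeasure μ]
    {m n : ℕ} (y : Ω → Fin m → ℂ) (A : Ω → Matrix (Fin m) (Fin n) ℂ) (x : Ω → Fin n → ℂ)
    (hy : ∀ i, MemLp (fun ω => y ω i) 2 μ)
    (hA : ∀ i j, MemLp (fun ω => A ω i j) 2 μ)
    (hx : ∀ j, MemLp (fun ω => x ω j) 2 μ)
    (hym : ∀ i, Measurable fun ω => y ω i)
    (hAm : ∀ i j, Measurable fun ω => A ω i j)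
    (hxm : ∀ j, Measurable fun ω => x ω j)
    (hIndep : iIndepFun (m := JMeas m n) (JFam y A x) μ) (F : Matrix (Fin m) (Fin m) ℂ) :
    ∫ ω, star (y ω - (A ω).mulVec (x ω)) ⬝ᵥ F.mulVec (y ω - (A ω).mulVec (x ω)) ∂μ =
      star (vmean μ y - (Matrix.of fun i j => ∫ ω, A ω i j ∂μ).mulVec (vmean μ x)) ⬝ᵥ
          F.mulVec (vmean μ y - (Matrix.of fun i j => ∫ ω, A ω i j ∂μ).mulVec (vmean μ x))
        + star (vmean μ x) ⬝ᵥ (Matrix.diagonal fun j =>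
            (F * vcov μ fun ω k => A ω k j).trace).mulVec (vmean μ x)
        + (F * vcov μ y).trace
        + (vcov μ x * Matrix.diagonal fun j => (F * vcov μ fun ω k => A ω k j).trace).trace
        + (vcov μ x * ((Matrix.of fun i j => ∫ ω, A ω i j ∂μ).conjTranspose * F *
            (Matrix.of fun i j => ∫ ω, A ω i j ∂μ))).trace := by
  classical
  -- family measurability
  have hfm : ∀ i, @Measurable Ω (JType m n i) _ (JMeas m n i) (JFam y A x i) := by
    intro i
    cases i with
    | y => exact measurable_pi_lambda _ hym
    | x => exact measurable_pi_lambda _ hxm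
    | col j => exact measurable_pi_lambda _ fun k => hAm k j
  -- index distinctness
  have hne_cx : ∀ k : Fin n, (JIdx.col k : JIdx n) ≠ JIdx.x := fun k h => by cases h
  have hne_cy : ∀ k : Fin n, (JIdx.col k : JIdx n) ≠ JIdx.y := fun k h => by cases h
  have hne_xy : (JIdx.x : JIdx n) ≠ JIdx.y := fun h => by cases h
  -- family-level independence
  have i_cx : ∀ k : Fin n, IndepFun (fun ω k' => A ω k' k) x μ :=
    fun k => hIndep.indepFun (hne_cx k)
  have i_cc : ∀ k l : Fin n, k ≠ l →
      IndepFun (fun ω k' => A ω k' k) (fun ω k' => A ω k' l) μ := by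
    intro k l h
    exact hIndep.indepFun (i := JIdx.col k) (j := JIdx.col l)
      (by intro hh; injection hh with h'; exact h h')
  have i_px : ∀ k l : Fin n,
      IndepFun (fun ω => ((fun k' => A ω k' k : Fin m → ℂ), (fun k' => A ω k' l : Fin m → ℂ))) x μ :=
    fun k l => hIndep.indepFun_prodMk hfm (.col k) (.col l) .x (hne_cx k) (hne_cx l)
  have i_py : ∀ l : Fin n,
      IndepFun (fun ω => ((fun k' => A ω k' l : Fin m → ℂ), x ω)) y μ :=
    fun l => hIndep.indepFun_prodMk hfm (.col l) .x .y (hne_cy l) hne_xy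
  -- scalar-level independence
  have s_Ax : ∀ (j : Fin m) (l : Fin n), IndepFun (fun ω => A ω j l) (fun ω => x ω l) μ :=
    fun j l => (i_cx l).comp (measurable_pi_apply j) (measurable_pi_apply l)
  have s2 : ∀ (i j : Fin m) (l : Fin n),
      IndepFun (fun ω => star (y ω i)) (fun ω => A ω j l * x ω l) μ := by
    intro i j l
    exact ((i_py l).comp
      (((measurable_pi_apply j).comp measurable_fst).mul
        ((measurable_pi_apply l).comp measurable_snd))
      (continuous_star.measurable.comp (measurable_pi_apply i))).symm
  have s3 : ∀ (i j : Fin m) (k : Fin n),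
      IndepFun (fun ω => star (A ω i k) * star (x ω k)) (fun ω => y ω j) μ := by
    intro i j k
    exact (i_py k).comp
      ((continuous_star.measurable.comp ((measurable_pi_apply i).comp measurable_fst)).mul
        (continuous_star.measurable.comp ((measurable_pi_apply k).comp measurable_snd)))
      (measurable_pi_apply j)
  have s4 : ∀ (i j : Fin m) (k l : Fin n),
      IndepFun (fun ω => star (A ω i k) * A ω j l) (fun ω => star (x ω k) * x ω l) μ := by
    intro i j k l
    exact (i_px k l).comp
      ((continuous_star.measurable.comp ((measurable_pi_apply i).comp measurable_fst)).mul
        ((measurable_pi_apply j).comp measurable_snd))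
      ((continuous_star.measurable.comp (measurable_pi_apply k)).mul (measurable_pi_apply l))
  have s_cc : ∀ (i j : Fin m) (k l : Fin n), k ≠ l →
      IndepFun (fun ω => star (A ω i k)) (fun ω => A ω j l) μ := by
    intro i j k l h
    exact (i_cc k l h).comp (continuous_star.measurable.comp (measurable_pi_apply i))
      (measurable_pi_apply j)
  -- integrability
  have iy : ∀ i, Integrable (fun ω => y ω i) μ := fun i => (hy i).integrable one_le_two
  have iys : ∀ i, Integrable (fun ω => star (y ω i)) μ :=
    fun i => (memLp_star (hy i)).integrable one_le_two
  have iA : ∀ i k, Integrable (fun ω => A ω i k) μ := fun i k => (hA i k).integrable one_le_two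
  have iAs : ∀ i k, Integrable (fun ω => star (A ω i k)) μ :=
    fun i k => (memLp_star (hA i k)).integrable one_le_two
  have ix : ∀ k, Integrable (fun ω => x ω k) μ := fun k => (hx k).integrable one_le_two
  have I1 : ∀ i j, Integrable (fun ω => star (y ω i) * y ω j) μ :=
    fun i j => integrable_mul₂ (memLp_star (hy i)) (hy j)
  have I2in : ∀ (j : Fin m) (l : Fin n), Integrable (fun ω => A ω j l * x ω l) μ :=
    fun j l => integrable_mul₂ (hA j l) (hx l)
  have I2 : ∀ (i j : Fin m) (l : Fin n),
      Integrable (fun ω => star (y ω i) * (A ω j l * x ω l)) μ :=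
    fun i j l => (s2 i j l).integrable_mul (iys i) (I2in j l)
  have I3in : ∀ (i : Fin m) (k : Fin n),
      Integrable (fun ω => star (A ω i k) * star (x ω k)) μ :=
    fun i k => integrable_mul₂ (memLp_star (hA i k)) (memLp_star (hx k))
  have I3 : ∀ (i j : Fin m) (k : Fin n),
      Integrable (fun ω => (star (A ω i k) * star (x ω k)) * y ω j) μ :=
    fun i j k => (s3 i j k).integrable_mul (I3in i k) (iy j)
  have I4A : ∀ (i j : Fin m) (k l : Fin n),
      Integrable (fun ω => star (A ω i k) * A ω j l) μ :=
    fun i j k l => integrable_mul₂ (memLp_star (hA i k)) (hA j l)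
  have I4X : ∀ (k l : Fin n), Integrable (fun ω => star (x ω k) * x ω l) μ :=
    fun k l => integrable_mul₂ (memLp_star (hx k)) (hx l)
  have I4' : ∀ (i j : Fin m) (k l : Fin n),
      Integrable (fun ω => (star (A ω i k) * A ω j l) * (star (x ω k) * x ω l)) μ :=
    fun i j k l => (s4 i j k l).integrable_mul (I4A i j k l) (I4X k l)
  have I4 : ∀ (i j : Fin m) (k l : Fin n),
      Integrable (fun ω => (star (A ω i k) * star (x ω k)) * (A ω j l * x ω l)) μ := by
    intro i j k l
    exact (I4' i j k l).congr (Filter.Eventually.of_forall fun ω => by ring)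
  -- expectation values
  have hsy : ∀ i, ∫ ω, star (y ω i) ∂μ = star (vmean μ y i) :=
    fun i => integral_conj (μ := μ) (f := fun ω => y ω i)
  have hsA : ∀ i k, ∫ ω, star (A ω i k) ∂μ = star (∫ ω, A ω i k ∂μ) :=
    fun i k => integral_conj (μ := μ) (f := fun ω => A ω i k)
  have ey : ∀ i j, ∫ ω, star (y ω i) * y ω j ∂μ
      = vcov μ y j i + star (vmean μ y i) * vmean μ y j := by
    intro i j
    have h2 : (fun ω => star (y ω i) * y ω j) = fun ω => y ω j * star (y ω i) :=
      funext fun ω => mul_comm _ _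
    rw [h2]
    have h := vcov_apply_eq (μ := μ) hy j i
    rw [h]; ring
  have ex : ∀ k l, ∫ ω, star (x ω k) * x ω l ∂μ
      = vcov μ x l k + star (vmean μ x k) * vmean μ x l := by
    intro k l
    have h2 : (fun ω => star (x ω k) * x ω l) = fun ω => x ω l * star (x ω k) :=
      funext fun ω => mul_comm _ _
    rw [h2, vcov_apply_eq (μ := μ) hx l k]
    ring
  have eA : ∀ (k : Fin n) (i j : Fin m), ∫ ω, star (A ω i k) * A ω j k ∂μ
      = (vcov μ fun ω k' => A ω k' k) j i
        + star (∫ ω, A ω i k ∂μ) * ∫ ω, A ω j k ∂μ := by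
    intro k i j
    have h2 : (fun ω => star (A ω i k) * A ω j k) = fun ω => A ω j k * star (A ω i k) :=
      funext fun ω => mul_comm _ _
    rw [h2, vcov_apply_eq (μ := μ) (v := fun ω k' => A ω k' k) (fun i' => hA i' k) j i]
    have hv : ∀ i' : Fin m, vmean μ (fun ω k' => A ω k' k) i' = ∫ ω, A ω i' k ∂μ :=
      fun _ => rfl
    simp only [hv]
    ring
  have eAx : ∀ (j : Fin m) (l : Fin n), ∫ ω, A ω j l * x ω l ∂μ
      = (∫ ω, A ω j l ∂μ) * vmean μ x l :=
    fun j l => indep_integral_mul (s_Ax j l) (iA j l) (ix l)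
  have e2 : ∀ (i j : Fin m) (l : Fin n), ∫ ω, star (y ω i) * (A ω j l * x ω l) ∂μ
      = star (vmean μ y i) * ((∫ ω, A ω j l ∂μ) * vmean μ x l) := by
    intro i j l
    rw [indep_integral_mul (s2 i j l) (iys i) (I2in j l), hsy i, eAx j l]
  have e3 : ∀ (i j : Fin m) (k : Fin n),
      ∫ ω, (star (A ω i k) * star (x ω k)) * y ω j ∂μ
      = (star (∫ ω, A ω i k ∂μ) * star (vmean μ x k)) * vmean μ y j := by
    intro i j k
    rw [indep_integral_mul (s3 i j k) (I3in i k) (iy j)]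
    congr 1
    have h2 : (fun ω => star (A ω i k) * star (x ω k)) = fun ω => star (A ω i k * x ω k) :=
      funext fun ω => (star_mul' _ _).symm
    have h3 : ∫ ω, star (A ω i k * x ω k) ∂μ = star (∫ ω, A ω i k * x ω k ∂μ) :=
      integral_conj (μ := μ) (f := fun ω => A ω i k * x ω k)
    rw [h2, h3, eAx i k, star_mul']
  have e4A : ∀ (i j : Fin m) (k l : Fin n), ∫ ω, star (A ω i k) * A ω j l ∂μ
      = (if k = l then (vcov μ fun ω k' => A ω k' k) j i else 0)
        + star (∫ ω, A ω i k ∂μ) * ∫ ω, A ω j l ∂μ := by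
    intro i j k l
    by_cases h : k = l
    · subst h
      rw [if_pos rfl]
      exact eA k i j
    · rw [if_neg h, zero_add, indep_integral_mul (s_cc i j k l h) (iAs i k) (iA j l), hsA i k]
  have e4 : ∀ (i j : Fin m) (k l : Fin n),
      ∫ ω, (star (A ω i k) * star (x ω k)) * (A ω j l * x ω l) ∂μ
      = ((if k = l then (vcov μ fun ω k' => A ω k' k) j i else 0)
          + star (∫ ω, A ω i k ∂μ) * ∫ ω, A ω j l ∂μ)
        * (vcov μ x l k + star (vmean μ x k) * vmean μ x l) := by
    intro i j k l
    have hrw : (fun ω => (star (A ω i k) * star (x ω k)) * (A ω j l * x ω l))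
        = fun ω => (star (A ω i k) * A ω j l) * (star (x ω k) * x ω l) :=
      funext fun ω => by ring
    rw [hrw, indep_integral_mul (s4 i j k l) (I4A i j k l) (I4X k l), e4A i j k l, ex k l]
  -- pointwise expansion of the quadratic form
  have hexp : ∀ ω, star (y ω - (A ω).mulVec (x ω)) ⬝ᵥ F.mulVec (y ω - (A ω).mulVec (x ω))
      = ∑ i, ∑ j, F i j * ((star (y ω i) * y ω j)
          - (∑ l, star (y ω i) * (A ω j l * x ω l))
          - (∑ k, (star (A ω i k) * star (x ω k)) * y ω j)
          + ∑ k, ∑ l, (star (A ω i k) * star (x ω k)) * (A ω j l * x ω l)) := by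
    intro ω
    simp only [dotProduct, mulVec, Pi.sub_apply, Pi.star_apply, star_sub]
    refine Finset.sum_congr rfl fun i _ => ?_
    rw [Finset.mul_sum]
    refine Finset.sum_congr rfl fun j _ => ?_
    have hstar : star (∑ k, A ω i k * x ω k) = ∑ k, star (A ω i k) * star (x ω k) := by
      rw [star_sum]
      exact Finset.sum_congr rfl fun k _ => star_mul' _ _
    have h1 : ∑ l, star (y ω i) * (A ω j l * x ω l)
        = star (y ω i) * ∑ l, A ω j l * x ω l := by rw [Finset.mul_sum]
    have h2 : ∑ k, (star (A ω i k) * star (x ω k)) * y ω j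
        = (∑ k, star (A ω i k) * star (x ω k)) * y ω j := by rw [Finset.sum_mul]
    have h3 : ∑ k, ∑ l, (star (A ω i k) * star (x ω k)) * (A ω j l * x ω l)
        = (∑ k, star (A ω i k) * star (x ω k)) * ∑ l, A ω j l * x ω l := by
      rw [Finset.sum_mul_sum]
    rw [hstar, h1, h2, h3]
    ring
  have Iinner : ∀ i j, Integrable (fun ω => (star (y ω i) * y ω j)
      - (∑ l, star (y ω i) * (A ω j l * x ω l))
      - (∑ k, (star (A ω i k) * star (x ω k)) * y ω j)
      + ∑ k, ∑ l, (star (A ω i k) * star (x ω k)) * (A ω j l * x ω l)) μ := by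
    intro i j
    exact (((I1 i j).sub (integrable_finset_sum _ fun l _ => I2 i j l)).sub
      (integrable_finset_sum _ fun k _ => I3 i j k)).add
      (integrable_finset_sum _ fun k _ => integrable_finset_sum _ fun l _ => I4 i j k l)
  have hint : ∫ ω, star (y ω - (A ω).mulVec (x ω)) ⬝ᵥ F.mulVec (y ω - (A ω).mulVec (x ω)) ∂μ
      = ∑ i, ∑ j, F i j * (((vcov μ y j i + star (vmean μ y i) * vmean μ y j))
          - (∑ l, star (vmean μ y i) * ((∫ ω, A ω j l ∂μ) * vmean μ x l))
          - (∑ k, (star (∫ ω, A ω i k ∂μ) * star (vmean μ x k)) * vmean μ y j)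
          + ∑ k, ∑ l, ((if k = l then (vcov μ fun ω k' => A ω k' k) j i else 0)
              + star (∫ ω, A ω i k ∂μ) * ∫ ω, A ω j l ∂μ)
            * (vcov μ x l k + star (vmean μ x k) * vmean μ x l)) := by
    rw [integral_congr_ae (Filter.Eventually.of_forall hexp)]
    rw [integral_finset_sum _ fun i _ =>
      integrable_finset_sum _ fun j _ => (Iinner i j).const_mul (F i j)]
    refine Finset.sum_congr rfl fun i _ => ?_
    rw [integral_finset_sum _ fun j _ => (Iinner i j).const_mul (F i j)]
    refine Finset.sum_congr rfl fun j _ => ?_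
    rw [integral_const_mul]
    congr 1
    have Id2 : Integrable (fun ω => ∑ l, star (y ω i) * (A ω j l * x ω l)) μ :=
      integrable_finset_sum _ fun l _ => I2 i j l
    have Id3 : Integrable (fun ω => ∑ k, star (A ω i k) * star (x ω k) * y ω j) μ :=
      integrable_finset_sum _ fun k _ => I3 i j k
    have Id4 : Integrable
        (fun ω => ∑ k, ∑ l, star (A ω i k) * star (x ω k) * (A ω j l * x ω l)) μ :=
      integrable_finset_sum _ fun k _ => integrable_finset_sum _ fun l _ => I4 i j k l
    have Ia : Integrable (fun ω => star (y ω i) * y ω j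
        - ∑ l, star (y ω i) * (A ω j l * x ω l)) μ := (I1 i j).sub Id2
    have Ib : Integrable (fun ω => star (y ω i) * y ω j
        - ∑ l, star (y ω i) * (A ω j l * x ω l)
        - ∑ k, star (A ω i k) * star (x ω k) * y ω j) μ := Ia.sub Id3
    rw [integral_add Ib Id4, integral_sub Ia Id3, integral_sub (I1 i j) Id2,
      integral_finset_sum _ fun l _ => I2 i j l,
      integral_finset_sum _ fun k _ => I3 i j k,
      integral_finset_sum _ fun k _ => integrable_finset_sum _ fun l _ => I4 i j k l]
    rw [ey i j,
      Finset.sum_congr rfl fun l _ => e2 i j l,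
      Finset.sum_congr rfl fun k _ => e3 i j k,
      Finset.sum_congr rfl fun k _ => integral_finset_sum _ fun l _ => I4 i j k l,
      Finset.sum_congr rfl fun k _ => Finset.sum_congr rfl fun l _ => e4 i j k l]
  rw [hint]
  exact alg_identity F (vcov μ y) (vcov μ x) (fun k => vcov μ fun ω k' => A ω k' k)
    (Matrix.of fun i j => ∫ ω, A ω i j ∂μ) (vmean μ y) (vmean μ x)

/-- **Lemma 1 of the paper.** If `y`, `A`, `x` are mutually independent with
finite second moments, the columns of `A` are mutually independent, and `F` is a deterministic
Hermitian matrix, then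
`E[(y−Ax)ᴴ F (y−Ax)] = (⟨y⟩−⟨A⟩⟨x⟩)ᴴ F (⟨y⟩−⟨A⟩⟨x⟩) + ⟨x⟩ᴴ B ⟨x⟩ + Tr(F Σ_y) + Tr(Σ_x B)
  + Tr(Σ_x ⟨A⟩ᴴ F ⟨A⟩)` with `B = diag(Tr(F Σ_{a_1}), …, Tr(F Σ_{a_n}))`. -/
theorem stmt0 {Ω : Type*} [MeasurableSpace Ω] (μ : Measure Ω) [IsProbabilityMeasure μ]
    {m n : ℕ} (y : Ω → Fin m → ℂ) (A : Ω → Matrix (Fin m) (Fin n) ℂ) (x : Ω → Fin n → ℂ)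
    (hy : ∀ i, MemLp (fun ω => y ω i) 2 μ)
    (hA : ∀ i j, MemLp (fun ω => A ω i j) 2 μ)
    (hx : ∀ j, MemLp (fun ω => x ω j) 2 μ)
    (hIndep : iIndepFun (m := JMeas m n) (JFam y A x) μ)
    (F : Matrix (Fin m) (Fin m) ℂ) (hF : F.IsHermitian) :
    ∫ ω, star (y ω - (A ω).mulVec (x ω)) ⬝ᵥ F.mulVec (y ω - (A ω).mulVec (x ω)) ∂μ =
      (let Abar : Matrix (Fin m) (Fin n) ℂ := Matrix.of fun i j => ∫ ω, A ω i j ∂μ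
       let B : Matrix (Fin n) (Fin n) ℂ :=
         Matrix.diagonal fun j => (F * vcov μ fun ω k => A ω k j).trace
       let d : Fin m → ℂ := vmean μ y - Abar.mulVec (vmean μ x)
       star d ⬝ᵥ F.mulVec d + star (vmean μ x) ⬝ᵥ B.mulVec (vmean μ x)
         + (F * vcov μ y).trace + (vcov μ x * B).trace
         + (vcov μ x * (Abar.conjTranspose * F * Abar)).trace) := by

  classical
  set y' : Ω → Fin m → ℂ := fun ω i => ((hy i).1.mk _) ω with hy'def
  set x' : Ω → Fin n → ℂ := fun ω j => ((hx j).1.mk _) ω with hx'def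
  set A' : Ω → Matrix (Fin m) (Fin n) ℂ :=
    fun ω => Matrix.of fun i j => ((hA i j).1.mk _) ω with hA'def
  have hyae : ∀ i, (fun ω => y ω i) =ᵐ[μ] fun ω => y' ω i := fun i => (hy i).1.ae_eq_mk
  have hxae : ∀ j, (fun ω => x ω j) =ᵐ[μ] fun ω => x' ω j := fun j => (hx j).1.ae_eq_mk
  have hAae : ∀ i j, (fun ω => A ω i j) =ᵐ[μ] fun ω => A' ω i j := fun i j => (hA i j).1.ae_eq_mk
  have hy2 : ∀ i, MemLp (fun ω => y' ω i) 2 μ := fun i => (hy i).ae_eq (hyae i)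
  have hx2 : ∀ j, MemLp (fun ω => x' ω j) 2 μ := fun j => (hx j).ae_eq (hxae j)
  have hA2 : ∀ i j, MemLp (fun ω => A' ω i j) 2 μ := fun i j => (hA i j).ae_eq (hAae i j)
  have hy'm : ∀ i, Measurable fun ω => y' ω i :=
    fun i => (hy i).1.stronglyMeasurable_mk.measurable
  have hx'm : ∀ j, Measurable fun ω => x' ω j :=
    fun j => (hx j).1.stronglyMeasurable_mk.measurable
  have hA'm : ∀ i j, Measurable fun ω => A' ω i j :=
    fun i j => (hA i j).1.stronglyMeasurable_mk.measurable
  have hyv : y =ᵐ[μ] y' := by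
    have h : ∀ᵐ ω ∂μ, ∀ i, y ω i = y' ω i := MeasureTheory.ae_all_iff.2 fun i => hyae i
    filter_upwards [h] with ω hω
    funext i; exact hω i
  have hxv : x =ᵐ[μ] x' := by
    have h : ∀ᵐ ω ∂μ, ∀ j, x ω j = x' ω j := MeasureTheory.ae_all_iff.2 fun j => hxae j
    filter_upwards [h] with ω hω
    funext j; exact hω j
  have hAv : A =ᵐ[μ] A' := by
    have h : ∀ᵐ ω ∂μ, ∀ i j, A ω i j = A' ω i j :=
      MeasureTheory.ae_all_iff.2 fun i => MeasureTheory.ae_all_iff.2 fun j => hAae i j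
    filter_upwards [h] with ω hω
    funext i j; exact hω i j
  have hIndep' : iIndepFun (m := JMeas m n) (JFam y' A' x') μ := by
    refine iIndepFun_ae_eq hIndep ?_
    intro i
    cases i with
    | y => exact hyv
    | x => exact hxv
    | col j =>
      filter_upwards [hAv] with ω hω
      show (fun k => A ω k j) = fun k => A' ω k j
      funext k; rw [hω]
  have hL : ∫ ω, star (y ω - (A ω).mulVec (x ω)) ⬝ᵥ F.mulVec (y ω - (A ω).mulVec (x ω)) ∂μ
      = ∫ ω, star (y' ω - (A' ω).mulVec (x' ω)) ⬝ᵥ F.mulVec (y' ω - (A' ω).mulVec (x' ω)) ∂μ := by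
    apply integral_congr_ae
    filter_upwards [hyv, hxv, hAv] with ω h1 h2 h3
    rw [h1, h2, h3]
  have hmy : vmean μ y = vmean μ y' := funext fun i => integral_congr_ae (hyae i)
  have hmx : vmean μ x = vmean μ x' := funext fun j => integral_congr_ae (hxae j)
  have hcy : vcov μ y = vcov μ y' := by
    ext i j
    show (∫ ω, (y ω i - vmean μ y i) * star (y ω j - vmean μ y j) ∂μ)
      = ∫ ω, (y' ω i - vmean μ y' i) * star (y' ω j - vmean μ y' j) ∂μ
    rw [← hmy]
    exact integral_congr_ae (by
      filter_upwards [hyae i, hyae j] with ω h1 h2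
      rw [h1, h2])
  have hcx : vcov μ x = vcov μ x' := by
    ext i j
    show (∫ ω, (x ω i - vmean μ x i) * star (x ω j - vmean μ x j) ∂μ)
      = ∫ ω, (x' ω i - vmean μ x' i) * star (x' ω j - vmean μ x' j) ∂μ
    rw [← hmx]
    exact integral_congr_ae (by
      filter_upwards [hxae i, hxae j] with ω h1 h2
      rw [h1, h2])
  have hmc : ∀ j, vmean μ (fun ω k => A ω k j) = vmean μ (fun ω k => A' ω k j) :=
    fun j => funext fun k => integral_congr_ae (hAae k j)
  have hck : ∀ j, (vcov μ fun ω k => A ω k j) = vcov μ fun ω k => A' ω k j := by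
    intro j
    ext i i'
    show (∫ ω, (A ω i j - vmean μ (fun ω k => A ω k j) i)
        * star (A ω i' j - vmean μ (fun ω k => A ω k j) i') ∂μ)
      = ∫ ω, (A' ω i j - vmean μ (fun ω k => A' ω k j) i)
        * star (A' ω i' j - vmean μ (fun ω k => A' ω k j) i') ∂μ
    rw [← hmc j]
    exact integral_congr_ae (by
      filter_upwards [hAae i j, hAae i' j] with ω h1 h2
      rw [h1, h2])
  have hab : (Matrix.of fun i j => ∫ ω, A ω i j ∂μ)
      = Matrix.of fun i j => ∫ ω, A' ω i j ∂μ := by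
    ext i j
    exact integral_congr_ae (hAae i j)
  show ∫ ω, star (y ω - (A ω).mulVec (x ω)) ⬝ᵥ F.mulVec (y ω - (A ω).mulVec (x ω)) ∂μ =
      star (vmean μ y - (Matrix.of fun i j => ∫ ω, A ω i j ∂μ).mulVec (vmean μ x)) ⬝ᵥ
          F.mulVec (vmean μ y - (Matrix.of fun i j => ∫ ω, A ω i j ∂μ).mulVec (vmean μ x))
        + star (vmean μ x) ⬝ᵥ (Matrix.diagonal fun j =>
            (F * vcov μ fun ω k => A ω k j).trace).mulVec (vmean μ x)
        + (F * vcov μ y).trace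
        + (vcov μ x * Matrix.diagonal fun j => (F * vcov μ fun ω k => A ω k j).trace).trace
        + (vcov μ x * ((Matrix.of fun i j => ∫ ω, A ω i j ∂μ).conjTranspose * F *
            (Matrix.of fun i j => ∫ ω, A ω i j ∂μ))).trace
  rw [hL, hmy, hmx, hcy, hcx, hab]
  simp only [hck]
  exact stmt0_aux μ y' A' x' hy2 hA2 hx2 hy'm hA'm hx'm hIndep' F
end

section
/- Let X and E be independent real Gaussian random variables with X ~ N(m, s²), s > 0, and E ~ N(0, n²), n ≥ 0, and let Y = X + E. Let l < u be real numbers, set η₁ = (l−m)/√(s²+n²), η₂ = (u−m)/√(s²+n²), and Z = Φ(η₂) − Φ(η₁). Then P(Y ∈ (l, u]) = Z > 0 and the conditional expectation of X given the event {Y ∈ (l, u]} equals m + (s²/√(s²+n²)) · (φ(η₁) − φ(η₂))/Z. -/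
open MeasureTheory ProbabilityTheory

/-- The probability density function of the standard normal distribution. -/
noncomputable def stdNormalPDF (x : ℝ) : ℝ :=
  (Real.sqrt (2 * Real.pi))⁻¹ * Real.exp (-x ^ 2 / 2)

/-- The cumulative distribution function of the standard normal distribution. -/
noncomputable def stdNormalCDF (x : ℝ) : ℝ :=
  ∫ t in Set.Iic x, stdNormalPDF t

open Real
open scoped ENNReal NNReal

noncomputable def npdf (m σ y : ℝ) : ℝ := σ⁻¹ * stdNormalPDF ((y - m) / σ)

lemma stdNormalPDF_nonneg (x : ℝ) : 0 ≤ stdNormalPDF x := by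
  unfold stdNormalPDF; positivity

lemma stdNormalPDF_pos (x : ℝ) : 0 < stdNormalPDF x := by
  unfold stdNormalPDF
  have := Real.pi_pos
  positivity

lemma continuous_stdNormalPDF : Continuous stdNormalPDF := by
  unfold stdNormalPDF; fun_prop

lemma integrable_stdNormalPDF : Integrable stdNormalPDF := by
  have : stdNormalPDF = fun x => (Real.sqrt (2 * Real.pi))⁻¹ * Real.exp (-(2⁻¹) * x ^ 2) := by
    funext x; unfold stdNormalPDF; ring_nf
  rw [this]
  exact (integrable_exp_neg_mul_sq (by norm_num)).const_mul _

lemma npdf_eq_gaussianPDFReal {σ : ℝ} (hσ : 0 < σ) (m : ℝ) :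
    npdf m σ = gaussianPDFReal m (σ ^ 2).toNNReal := by
  funext x
  unfold npdf stdNormalPDF
  rw [gaussianPDFReal]
  have h2 : ((σ ^ 2).toNNReal : ℝ) = σ ^ 2 := Real.coe_toNNReal _ (by positivity)
  rw [h2]
  have h3 : Real.sqrt (2 * π * σ ^ 2) = Real.sqrt (2 * π) * σ := by
    rw [Real.sqrt_mul (by positivity), Real.sqrt_sq hσ.le]
  rw [h3]
  have h4 : -((x - m) / σ) ^ 2 / 2 = -(x - m) ^ 2 / (2 * σ ^ 2) := by
    rw [div_pow]; ring
  rw [mul_inv, h4]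
  ring

lemma var_ne_zero {σ : ℝ} (hσ : 0 < σ) : (σ ^ 2).toNNReal ≠ 0 := by
  simp only [ne_eq, Real.toNNReal_eq_zero, not_le]
  positivity

lemma npdf_nonneg (m : ℝ) {σ : ℝ} (hσ : 0 < σ) (y : ℝ) : 0 ≤ npdf m σ y := by
  unfold npdf
  have := stdNormalPDF_nonneg ((y - m) / σ)
  positivity

lemma measurable_npdf (m σ : ℝ) : Measurable (npdf m σ) := by
  unfold npdf stdNormalPDF; fun_prop

lemma integrable_npdf (m : ℝ) {σ : ℝ} (hσ : 0 < σ) : Integrable (npdf m σ) := by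
  rw [npdf_eq_gaussianPDFReal hσ]
  exact integrable_gaussianPDFReal _ _

lemma integral_npdf (m : ℝ) {σ : ℝ} (hσ : 0 < σ) : ∫ y, npdf m σ y = 1 := by
  rw [npdf_eq_gaussianPDFReal hσ]
  exact integral_gaussianPDFReal_eq_one m (var_ne_zero hσ)

/-- CDF over Ioc. -/
lemma cdf_Ioc {σ : ℝ} (hσ : 0 < σ) (m l u : ℝ) (hlu : l ≤ u) :
    ∫ y in Set.Ioc l u, npdf m σ y =
      stdNormalCDF ((u - m) / σ) - stdNormalCDF ((l - m) / σ) := by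
  have hint := integrable_stdNormalPDF
  unfold stdNormalCDF
  rw [intervalIntegral.integral_Iic_sub_Iic hint.integrableOn hint.integrableOn]
  have h1 : ∫ y in Set.Ioc l u, npdf m σ y = ∫ y in l..u, npdf m σ y := by
    rw [intervalIntegral.integral_of_le hlu]
  rw [h1]
  have h2 : ∀ y : ℝ, npdf m σ y = σ⁻¹ * stdNormalPDF (σ⁻¹ * y + -(m / σ)) := by
    intro y; unfold npdf; congr 1; field_simp; ring
  simp_rw [h2]
  rw [intervalIntegral.integral_const_mul,
    intervalIntegral.integral_comp_mul_add stdNormalPDF (inv_ne_zero hσ.ne') (-(m / σ))]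
  rw [inv_inv, smul_eq_mul, ← mul_assoc, inv_mul_cancel₀ hσ.ne', one_mul]
  congr 1 <;> · field_simp; try ring

lemma hasDerivAt_npdf_anti (m : ℝ) {σ : ℝ} (hσ : 0 < σ) (y : ℝ) :
    HasDerivAt (fun y => -σ * stdNormalPDF ((y - m) / σ))
      ((y - m) * npdf m σ y) y := by
  have h1 : HasDerivAt (fun y : ℝ => -((y - m) / σ) ^ 2 / 2) (-((y - m) / σ ^ 2)) y := by
    have h0 : HasDerivAt (fun y : ℝ => (y - m) / σ) (1 / σ) y :=
      ((hasDerivAt_id y).sub_const m).div_const σ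
    have := ((h0.pow 2).neg.div_const 2)
    refine this.congr_deriv ?_
    field_simp
    have hc : σ * ((y - m) / σ) = y - m := by field_simp [hσ.ne']
    rw [show (2:ℕ) - 1 = 1 from rfl, pow_one, mul_assoc, hc]
    ring
  have h2 := (h1.exp).const_mul (-σ * (Real.sqrt (2 * Real.pi))⁻¹)
  have h3 : (fun y => -σ * stdNormalPDF ((y - m) / σ)) =
      fun y => -σ * (Real.sqrt (2 * Real.pi))⁻¹ * Real.exp (-((y - m) / σ) ^ 2 / 2) := by
    funext y; unfold stdNormalPDF; ring
  rw [h3]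
  refine h2.congr_deriv ?_
  unfold npdf stdNormalPDF
  field_simp

lemma moment_Ioc {σ : ℝ} (hσ : 0 < σ) (m l u : ℝ) (hlu : l ≤ u) :
    ∫ y in Set.Ioc l u, (y - m) * npdf m σ y =
      σ * (stdNormalPDF ((l - m) / σ) - stdNormalPDF ((u - m) / σ)) := by
  rw [← intervalIntegral.integral_of_le hlu]
  have hcont : Continuous (fun y => (y - m) * npdf m σ y) := by
    unfold npdf stdNormalPDF; fun_prop
  rw [intervalIntegral.integral_eq_sub_of_hasDerivAt
    (fun y _ => hasDerivAt_npdf_anti m hσ y) (hcont.intervalIntegrable l u)]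
  ring

lemma integral_exp_shift {b : ℝ} (hb : 0 < b) (c : ℝ) :
    ∫ x : ℝ, Real.exp (-b * (x - c) ^ 2) = Real.sqrt (π / b) := by
  rw [show (fun x : ℝ => Real.exp (-b * (x - c) ^ 2)) =
      (fun x : ℝ => (fun t : ℝ => Real.exp (-b * t ^ 2)) (x - c)) from rfl,
    integral_sub_right_eq_self (fun t : ℝ => Real.exp (-b * t ^ 2)) c]
  exact integral_gaussian b

lemma integral_id_mul_exp {b : ℝ} (hb : 0 < b) :
    ∫ x : ℝ, x * Real.exp (-b * x ^ 2) = 0 := by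
  have hderiv : ∀ x : ℝ, HasDerivAt (fun x : ℝ => -(2 * b)⁻¹ * Real.exp (-b * x ^ 2))
      (x * Real.exp (-b * x ^ 2)) x := by
    intro x
    have h0 : HasDerivAt (fun x : ℝ => -b * x ^ 2) (-b * (2 * x)) x := by
      simpa using ((hasDerivAt_pow 2 x).const_mul (-b))
    have := (h0.exp).const_mul (-(2 * b)⁻¹)
    refine this.congr_deriv ?_
    field_simp
  exact integral_eq_zero_of_hasDerivAt_of_integrable hderiv
    (integrable_mul_exp_neg_mul_sq hb) ((integrable_exp_neg_mul_sq hb).const_mul _)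

lemma integral_id_mul_exp_shift {b : ℝ} (hb : 0 < b) (c : ℝ) :
    ∫ x : ℝ, x * Real.exp (-b * (x - c) ^ 2) = c * Real.sqrt (π / b) := by
  rw [show (fun x : ℝ => x * Real.exp (-b * (x - c) ^ 2)) =
      (fun x : ℝ => (fun t : ℝ => (t + c) * Real.exp (-b * t ^ 2)) (x - c)) from
      funext fun x => by ring_nf,
    integral_sub_right_eq_self (fun t : ℝ => (t + c) * Real.exp (-b * t ^ 2)) c]
  have h1 : Integrable (fun t : ℝ => t * Real.exp (-b * t ^ 2)) :=
    integrable_mul_exp_neg_mul_sq hb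
  have h2 : Integrable (fun t : ℝ => c * Real.exp (-b * t ^ 2)) :=
    (integrable_exp_neg_mul_sq hb).const_mul c
  have : (fun t : ℝ => (t + c) * Real.exp (-b * t ^ 2)) =
      fun t : ℝ => t * Real.exp (-b * t ^ 2) + c * Real.exp (-b * t ^ 2) :=
    funext fun t => by ring
  rw [this, integral_add h1 h2, integral_id_mul_exp hb, zero_add,
    MeasureTheory.integral_const_mul, integral_gaussian]

section Conv
variable {s n : ℝ} (hs : 0 < s) (hn : 0 < n) (m y : ℝ)

include hs hn in
lemma conv_exponent (x : ℝ) :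
    -((x - m) / s) ^ 2 / 2 + -((y - x) / n) ^ 2 / 2 =
      -((s ^ 2 + n ^ 2) / (2 * s ^ 2 * n ^ 2)) *
          (x - (m + s ^ 2 / (s ^ 2 + n ^ 2) * (y - m))) ^ 2 +
        -(y - m) ^ 2 / (2 * (s ^ 2 + n ^ 2)) := by
  have hs' : s ≠ 0 := hs.ne'
  have hn' : n ≠ 0 := hn.ne'
  have hS : s ^ 2 + n ^ 2 ≠ 0 := by positivity
  field_simp
  ring

include hs hn in
lemma conv_prod_eq (x : ℝ) :
    npdf m s x * npdf 0 n (y - x) =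
      ((s * n * (2 * π))⁻¹ * Real.exp (-(y - m) ^ 2 / (2 * (s ^ 2 + n ^ 2)))) *
        Real.exp (-((s ^ 2 + n ^ 2) / (2 * s ^ 2 * n ^ 2)) *
          (x - (m + s ^ 2 / (s ^ 2 + n ^ 2) * (y - m))) ^ 2) := by
  have h2π : Real.sqrt (2 * π) ^ 2 = 2 * π := Real.sq_sqrt (by positivity)
  unfold npdf stdNormalPDF
  rw [sub_zero]
  have : s⁻¹ * ((Real.sqrt (2 * π))⁻¹ * Real.exp (-((x - m) / s) ^ 2 / 2)) *
      (n⁻¹ * ((Real.sqrt (2 * π))⁻¹ * Real.exp (-((y - x) / n) ^ 2 / 2))) =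
      (s * n * Real.sqrt (2 * π) ^ 2)⁻¹ *
        Real.exp (-((x - m) / s) ^ 2 / 2 + -((y - x) / n) ^ 2 / 2) := by
    rw [Real.exp_add]; ring
  rw [this, h2π, conv_exponent hs hn m y x, Real.exp_add]
  ring

include hs hn in
lemma conv_const_eq :
    ((s * n * (2 * π))⁻¹ * Real.exp (-(y - m) ^ 2 / (2 * (s ^ 2 + n ^ 2)))) *
        Real.sqrt (π / ((s ^ 2 + n ^ 2) / (2 * s ^ 2 * n ^ 2))) =
      npdf m (Real.sqrt (s ^ 2 + n ^ 2)) y := by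
  have hS : (0:ℝ) < s ^ 2 + n ^ 2 := by positivity
  have hsS : (0:ℝ) < Real.sqrt (s ^ 2 + n ^ 2) := Real.sqrt_pos.mpr hS
  have h2π : Real.sqrt (2 * π) ^ 2 = 2 * π := Real.sq_sqrt (by positivity)
  have h2πpos : (0:ℝ) < Real.sqrt (2 * π) := Real.sqrt_pos.mpr (by positivity)
  have hπb : π / ((s ^ 2 + n ^ 2) / (2 * s ^ 2 * n ^ 2)) =
      2 * π * (s * n / Real.sqrt (s ^ 2 + n ^ 2)) ^ 2 := by
    rw [div_pow, mul_pow, Real.sq_sqrt hS.le]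
    field_simp
  rw [hπb, Real.sqrt_mul (by positivity), Real.sqrt_sq (by positivity)]
  unfold npdf stdNormalPDF
  have hexp : -((y - m) / Real.sqrt (s ^ 2 + n ^ 2)) ^ 2 / 2 =
      -(y - m) ^ 2 / (2 * (s ^ 2 + n ^ 2)) := by
    have hS' : s ^ 2 + n ^ 2 ≠ 0 := hS.ne'
    rw [div_pow, Real.sq_sqrt hS.le]
    field_simp
  rw [hexp]
  set E' := Real.exp (-(y - m) ^ 2 / (2 * (s ^ 2 + n ^ 2))) with hE
  have hc : (s * n * (2 * π))⁻¹ * (Real.sqrt (2 * π) * (s * n / Real.sqrt (s ^ 2 + n ^ 2))) =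
      (Real.sqrt (s ^ 2 + n ^ 2))⁻¹ * (Real.sqrt (2 * π))⁻¹ := by
    rw [← h2π]
    field_simp
    rw [Real.sqrt_sq (by positivity)]
  calc (s * n * (2 * π))⁻¹ * E' * (Real.sqrt (2 * π) * (s * n / Real.sqrt (s ^ 2 + n ^ 2)))
      = (s * n * (2 * π))⁻¹ * (Real.sqrt (2 * π) * (s * n / Real.sqrt (s ^ 2 + n ^ 2))) * E' := by
        ring
    _ = (Real.sqrt (s ^ 2 + n ^ 2))⁻¹ * (Real.sqrt (2 * π))⁻¹ * E' := by rw [hc]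
    _ = (Real.sqrt (s ^ 2 + n ^ 2))⁻¹ * ((Real.sqrt (2 * π))⁻¹ * E') := by ring

include hs hn in
lemma conv_npdf :
    ∫ x, npdf m s x * npdf 0 n (y - x) = npdf m (Real.sqrt (s ^ 2 + n ^ 2)) y := by
  have hb : (0:ℝ) < (s ^ 2 + n ^ 2) / (2 * s ^ 2 * n ^ 2) := by positivity
  simp_rw [conv_prod_eq hs hn m y]
  rw [MeasureTheory.integral_const_mul, integral_exp_shift hb]
  exact conv_const_eq hs hn m y

include hs hn in
lemma conv_npdf_mul :
    ∫ x, x * (npdf m s x * npdf 0 n (y - x)) =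
      (m + s ^ 2 / (s ^ 2 + n ^ 2) * (y - m)) * npdf m (Real.sqrt (s ^ 2 + n ^ 2)) y := by
  have hb : (0:ℝ) < (s ^ 2 + n ^ 2) / (2 * s ^ 2 * n ^ 2) := by positivity
  have h1 : ∀ x : ℝ, x * (npdf m s x * npdf 0 n (y - x)) =
      ((s * n * (2 * π))⁻¹ * Real.exp (-(y - m) ^ 2 / (2 * (s ^ 2 + n ^ 2)))) *
        (x * Real.exp (-((s ^ 2 + n ^ 2) / (2 * s ^ 2 * n ^ 2)) *
          (x - (m + s ^ 2 / (s ^ 2 + n ^ 2) * (y - m))) ^ 2)) := by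
    intro x
    rw [conv_prod_eq hs hn m y x]
    ring
  simp_rw [h1]
  rw [MeasureTheory.integral_const_mul, integral_id_mul_exp_shift hb]
  rw [← conv_const_eq hs hn m y]
  ring
end Conv

/-- Integral against a Gaussian measure as a density integral. -/
lemma integral_gaussianReal' {σ : ℝ} (hσ : 0 < σ) (m : ℝ) (h : ℝ → ℝ) :
    ∫ x, h x ∂(gaussianReal m (σ ^ 2).toNNReal) = ∫ x, npdf m σ x * h x := by
  rw [gaussianReal_of_var_ne_zero _ (var_ne_zero hσ)]
  have hd : gaussianPDF m (σ ^ 2).toNNReal =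
      fun x => ((fun x => (gaussianPDFReal m (σ ^ 2).toNNReal x).toNNReal) x : ℝ≥0∞) := rfl
  rw [hd, integral_withDensity_eq_integral_smul
    ((measurable_gaussianPDFReal _ _).real_toNNReal) h]
  congr 1
  funext x
  rw [NNReal.smul_def, Real.coe_toNNReal _ (gaussianPDFReal_nonneg _ _ _),
    npdf_eq_gaussianPDFReal hσ, smul_eq_mul]

lemma integrable_gaussianReal_iff {σ : ℝ} (hσ : 0 < σ) (m : ℝ) {h : ℝ → ℝ} :
    Integrable h (gaussianReal m (σ ^ 2).toNNReal) ↔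
      Integrable (fun x => npdf m σ x * h x) := by
  rw [gaussianReal_of_var_ne_zero _ (var_ne_zero hσ)]
  have hd : gaussianPDF m (σ ^ 2).toNNReal =
      fun x => ((fun x => (gaussianPDFReal m (σ ^ 2).toNNReal x).toNNReal) x : ℝ≥0∞) := rfl
  rw [hd, integrable_withDensity_iff_integrable_smul
    ((measurable_gaussianPDFReal _ _).real_toNNReal)]
  refine Iff.trans (integrable_congr (Filter.Eventually.of_forall fun x => ?_)) Iff.rfl
  show (gaussianPDFReal m (σ ^ 2).toNNReal x).toNNReal • h x = npdf m σ x * h x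
  rw [NNReal.smul_def, Real.coe_toNNReal _ (gaussianPDFReal_nonneg _ _ _),
    npdf_eq_gaussianPDFReal hσ, smul_eq_mul]

lemma integrable_abs_mul_npdf {σ : ℝ} (hσ : 0 < σ) (m : ℝ) :
    Integrable (fun x => |x| * npdf m σ x) := by
  have hb : (0:ℝ) < (2 * σ ^ 2)⁻¹ := by positivity
  have hrepr : ∀ x, npdf m σ x =
      (σ⁻¹ * (Real.sqrt (2 * π))⁻¹) * Real.exp (-(2 * σ ^ 2)⁻¹ * (x - m) ^ 2) := by
    intro x
    unfold npdf stdNormalPDF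
    rw [mul_assoc]
    congr 2
    rw [div_pow]
    field_simp
  have h1 : Integrable (fun t : ℝ => |t| * Real.exp (-(2 * σ ^ 2)⁻¹ * t ^ 2)) := by
    refine (integrable_mul_exp_neg_mul_sq hb).abs.congr
      (Filter.Eventually.of_forall fun t => ?_)
    simp [abs_mul, abs_of_pos (Real.exp_pos _)]
  have h2 : Integrable (fun t : ℝ => |m| * Real.exp (-(2 * σ ^ 2)⁻¹ * t ^ 2)) :=
    (integrable_exp_neg_mul_sq hb).const_mul _
  have h3 : Integrable (fun t : ℝ => (|t| + |m|) * Real.exp (-(2 * σ ^ 2)⁻¹ * t ^ 2)) := by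
    refine (h1.add h2).congr (Filter.Eventually.of_forall fun t => ?_)
    simp only [Pi.add_apply]
    ring
  have h4 := (h3.comp_sub_right m).const_mul (σ⁻¹ * (Real.sqrt (2 * π))⁻¹)
  refine h4.mono' ?_ (Filter.Eventually.of_forall fun x => ?_)
  · exact ((measurable_abs.mul (measurable_npdf m σ)).aestronglyMeasurable)
  · have hnn : 0 ≤ npdf m σ x := npdf_nonneg m hσ x
    rw [Real.norm_eq_abs, abs_mul, abs_abs, abs_of_nonneg hnn, hrepr x]
    have hxle : |x| ≤ |x - m| + |m| := by
      calc |x| = |(x - m) + m| := by ring_nf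
      _ ≤ |x - m| + |m| := abs_add_le _ _
    have hC : (0:ℝ) ≤ σ⁻¹ * (Real.sqrt (2 * π))⁻¹ := by positivity
    have hE : (0:ℝ) < Real.exp (-(2 * σ ^ 2)⁻¹ * (x - m) ^ 2) := Real.exp_pos _
    calc |x| * ((σ⁻¹ * (Real.sqrt (2 * π))⁻¹) * Real.exp (-(2 * σ ^ 2)⁻¹ * (x - m) ^ 2))
        ≤ (|x - m| + |m|) * ((σ⁻¹ * (Real.sqrt (2 * π))⁻¹) *
            Real.exp (-(2 * σ ^ 2)⁻¹ * (x - m) ^ 2)) := by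
          apply mul_le_mul_of_nonneg_right hxle (by positivity)
      _ = σ⁻¹ * (Real.sqrt (2 * π))⁻¹ *
            ((|x - m| + |m|) * Real.exp (-(2 * σ ^ 2)⁻¹ * (x - m) ^ 2)) := by ring

lemma integrable_id_mul_npdf {σ : ℝ} (hσ : 0 < σ) (m : ℝ) :
    Integrable (fun x => x * npdf m σ x) := by
  refine (integrable_abs_mul_npdf hσ m).mono'
    ((measurable_id.mul (measurable_npdf m σ)).aestronglyMeasurable)
    (Filter.Eventually.of_forall fun x => ?_)
  rw [Real.norm_eq_abs, abs_mul, abs_of_nonneg (npdf_nonneg m hσ x)]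

lemma integrable_sub_mul_npdf {σ : ℝ} (hσ : 0 < σ) (m c : ℝ) :
    Integrable (fun x => (x - c) * npdf m σ x) := by
  have := (integrable_id_mul_npdf hσ m).sub ((integrable_npdf m hσ).const_mul c)
  refine this.congr (Filter.Eventually.of_forall fun x => ?_)
  simp only [Pi.sub_apply]
  ring

lemma integrable_comp_fst {μ ν : Measure ℝ} [SFinite μ] [IsProbabilityMeasure ν]
    {T : ℝ → ℝ} (hT : Measurable T) (h : Integrable T μ) :
    Integrable (fun p : ℝ × ℝ => T p.1) (μ.prod ν) := by
  have hmap : (μ.prod ν).map Prod.fst = μ := by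
    rw [Measure.map_fst_prod]; simp
  rw [← hmap] at h
  exact (integrable_map_measure (by rw [hmap]; exact hT.aestronglyMeasurable)
    measurable_fst.aemeasurable).mp h

lemma total_eq {s n : ℝ} (hs : 0 < s) (hn : 0 < n) (m l u : ℝ)
    (T : ℝ → ℝ) (hT : Measurable T)
    (hTa : Integrable (fun x => |T x| * npdf m s x)) :
    ∫ p : ℝ × ℝ, Set.indicator {q : ℝ × ℝ | q.1 + q.2 ∈ Set.Ioc l u} (fun q => T q.1) p
        ∂((gaussianReal m (s ^ 2).toNNReal).prod (gaussianReal 0 (n ^ 2).toNNReal)) =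
      ∫ y in Set.Ioc l u, ∫ x, T x * (npdf m s x * npdf 0 n (y - x)) := by
  set μ := gaussianReal m (s ^ 2).toNNReal with hμ
  set ν := gaussianReal 0 (n ^ 2).toNNReal with hν
  have hS₀ : MeasurableSet {q : ℝ × ℝ | q.1 + q.2 ∈ Set.Ioc l u} :=
    (measurable_fst.add measurable_snd) measurableSet_Ioc
  -- integrability of T on μ
  have hTμ : Integrable T μ := by
    rw [hμ, integrable_gaussianReal_iff hs m]
    refine hTa.mono' ((measurable_npdf m s).mul hT).aestronglyMeasurable
      (Filter.Eventually.of_forall fun x => ?_)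
    rw [Real.norm_eq_abs, abs_mul, abs_of_nonneg (npdf_nonneg m hs x)]
    ring_nf
    exact le_refl _
  -- integrability of the indicator on the product
  have hInd : Integrable
      (fun p : ℝ × ℝ => Set.indicator {q : ℝ × ℝ | q.1 + q.2 ∈ Set.Ioc l u}
        (fun q => T q.1) p) (μ.prod ν) := by
    refine ((integrable_comp_fst hT hTμ).abs).mono'
      ((hT.comp measurable_fst).indicator hS₀).aestronglyMeasurable
      (Filter.Eventually.of_forall fun p => ?_)
    rw [Real.norm_eq_abs, Set.indicator_apply]
    split_ifs
    · exact le_refl _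
    · simp [abs_nonneg]
  rw [MeasureTheory.integral_prod _ hInd]
  -- inner integral over the second coordinate
  have hinner : ∀ x : ℝ, (∫ e, Set.indicator {q : ℝ × ℝ | q.1 + q.2 ∈ Set.Ioc l u}
      (fun q => T q.1) (x, e) ∂ν) =
      ∫ y, Set.indicator (Set.Ioc l u) (fun y => T x * npdf 0 n (y - x)) y := by
    intro x
    rw [hν, integral_gaussianReal' hn 0
      (fun e => Set.indicator {q : ℝ × ℝ | q.1 + q.2 ∈ Set.Ioc l u} (fun q => T q.1) (x, e))]
    rw [← integral_sub_right_eq_self (fun e => npdf 0 n e *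
      Set.indicator {q : ℝ × ℝ | q.1 + q.2 ∈ Set.Ioc l u} (fun q => T q.1) (x, e)) x]
    congr 1
    funext y
    rw [Set.indicator_apply, Set.indicator_apply]
    have hmem : (x, y - x) ∈ {q : ℝ × ℝ | q.1 + q.2 ∈ Set.Ioc l u} ↔ y ∈ Set.Ioc l u := by
      simp [Set.mem_setOf_eq]
    split_ifs with h1 h2 h2
    · ring
    · exact absurd (hmem.mp h1) h2
    · exact absurd (hmem.mpr h2) h1
    · simp
  simp_rw [hinner]
  rw [hμ, integral_gaussianReal' hs m]
  -- pull the density inside the inner integral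
  have hpull : ∀ x : ℝ, npdf m s x * (∫ y, Set.indicator (Set.Ioc l u)
      (fun y => T x * npdf 0 n (y - x)) y) =
      ∫ y, Set.indicator (Set.Ioc l u) (fun y => T x * (npdf m s x * npdf 0 n (y - x))) y := by
    intro x
    rw [← MeasureTheory.integral_const_mul]
    congr 1
    funext y
    rw [Set.indicator_apply, Set.indicator_apply]
    split_ifs
    · ring
    · simp
  simp_rw [hpull]
  -- swap the two integrals
  have hswap : Integrable (Function.uncurry (fun x y => Set.indicator (Set.Ioc l u)
      (fun y => T x * (npdf m s x * npdf 0 n (y - x))) y))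
      ((volume : Measure ℝ).prod (volume : Measure ℝ)) := by
    have hmeas : AEStronglyMeasurable (Function.uncurry (fun x y =>
        Set.indicator (Set.Ioc l u) (fun y => T x * (npdf m s x * npdf 0 n (y - x))) y))
        ((volume : Measure ℝ).prod (volume : Measure ℝ)) := by
      have : Function.uncurry (fun x y => Set.indicator (Set.Ioc l u)
          (fun y => T x * (npdf m s x * npdf 0 n (y - x))) y) =
          Set.indicator {p : ℝ × ℝ | p.2 ∈ Set.Ioc l u}
            (fun p => T p.1 * (npdf m s p.1 * npdf 0 n (p.2 - p.1))) := by
        funext p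
        rw [Function.uncurry]
        rw [Set.indicator_apply, Set.indicator_apply]
        rfl
      rw [this]
      exact (((hT.comp measurable_fst).mul
        (((measurable_npdf m s).comp measurable_fst).mul
          ((measurable_npdf 0 n).comp (measurable_snd.sub measurable_fst)))).indicator
        (measurable_snd measurableSet_Ioc)).aestronglyMeasurable
    rw [integrable_prod_iff hmeas]
    constructor
    · refine Filter.Eventually.of_forall fun x => ?_
      have hI : Integrable ((Set.Ioc l u).indicator
          (fun y => T x * npdf m s x * npdf 0 n (y - x))) volume :=
        (((integrable_npdf 0 hn).comp_sub_right x).const_mul (T x * npdf m s x)).indicator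
          measurableSet_Ioc
      refine hI.congr (Filter.Eventually.of_forall fun y => ?_)
      simp only [Function.uncurry_apply_pair, Set.indicator_apply]
      split_ifs
      · ring
      · rfl
    · refine (hTa.mono' (hmeas.norm.integral_prod_right')
        (Filter.Eventually.of_forall fun x => ?_))
      rw [Real.norm_eq_abs]
      have h1 : ∀ y : ℝ, ‖Function.uncurry (fun x y => Set.indicator (Set.Ioc l u)
          (fun y => T x * (npdf m s x * npdf 0 n (y - x))) y) (x, y)‖ ≤
          |T x| * npdf m s x * npdf 0 n (y - x) := by
        intro y
        simp only [Function.uncurry_apply_pair, Real.norm_eq_abs, Set.indicator_apply]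
        split_ifs
        · rw [abs_mul, abs_mul, abs_of_nonneg (npdf_nonneg m hs x),
            abs_of_nonneg (npdf_nonneg 0 hn (y - x)), mul_assoc]
        · simp only [abs_zero]
          have h5 := npdf_nonneg m hs x
          have h6 := npdf_nonneg 0 hn (y - x)
          positivity
      have h2 : (∫ y, ‖Function.uncurry (fun x y => Set.indicator (Set.Ioc l u)
          (fun y => T x * (npdf m s x * npdf 0 n (y - x))) y) (x, y)‖) ≤
          ∫ y, |T x| * npdf m s x * npdf 0 n (y - x) := by
        refine integral_mono_of_nonneg (Filter.Eventually.of_forall fun y => norm_nonneg _)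
          ?_ (Filter.Eventually.of_forall h1)
        exact ((integrable_npdf 0 hn).comp_sub_right x).const_mul _
      have h3 : (∫ y, |T x| * npdf m s x * npdf 0 n (y - x)) = |T x| * npdf m s x := by
        rw [MeasureTheory.integral_const_mul,
          integral_sub_right_eq_self (npdf 0 n) x, integral_npdf 0 hn, mul_one]
      have h4 : |∫ y, ‖Function.uncurry (fun x y => Set.indicator (Set.Ioc l u)
          (fun y => T x * (npdf m s x * npdf 0 n (y - x))) y) (x, y)‖| =
          ∫ y, ‖Function.uncurry (fun x y => Set.indicator (Set.Ioc l u)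
          (fun y => T x * (npdf m s x * npdf 0 n (y - x))) y) (x, y)‖ :=
        abs_of_nonneg (integral_nonneg fun y => norm_nonneg _)
      rw [h4]
      exact h2.trans (le_of_eq h3)
  rw [MeasureTheory.integral_integral_swap hswap]
  -- pull the indicator out of the inner integral
  have hpull2 : ∀ y : ℝ, (∫ x, Set.indicator (Set.Ioc l u)
      (fun y => T x * (npdf m s x * npdf 0 n (y - x))) y) =
      Set.indicator (Set.Ioc l u)
        (fun y => ∫ x, T x * (npdf m s x * npdf 0 n (y - x))) y := by
    intro y
    by_cases hy : y ∈ Set.Ioc l u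
    · simp only [Set.indicator_of_mem hy]
    · simp only [Set.indicator_of_notMem hy, integral_zero]
  simp_rw [hpull2]
  rw [integral_indicator measurableSet_Ioc]

lemma cdf_diff_pos {a b : ℝ} (hab : a < b) : 0 < stdNormalCDF b - stdNormalCDF a := by
  unfold stdNormalCDF
  rw [intervalIntegral.integral_Iic_sub_Iic integrable_stdNormalPDF.integrableOn
    integrable_stdNormalPDF.integrableOn]
  exact intervalIntegral.intervalIntegral_pos_of_pos_on
    integrable_stdNormalPDF.intervalIntegrable (fun x _ => stdNormalPDF_pos x) hab

theorem stmt13_aux {Ω : Type*} [MeasurableSpace Ω] (P : Measure Ω) [IsProbabilityMeasure P]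
    (X E : Ω → ℝ) (hX : Measurable X) (hE : Measurable E)
    (m s n : ℝ) (hs : 0 < s) (hn : 0 ≤ n)
    (hXd : P.map X = gaussianReal m (s ^ 2).toNNReal)
    (hEd : P.map E = gaussianReal 0 (n ^ 2).toNNReal)
    (hInd : IndepFun X E P)
    (l u : ℝ) (hlu : l < u)
    (σ η₁ η₂ Z : ℝ)
    (hσdef : σ = Real.sqrt (s ^ 2 + n ^ 2))
    (hη₁ : η₁ = (l - m) / σ) (hη₂ : η₂ = (u - m) / σ)
    (hZ : Z = stdNormalCDF η₂ - stdNormalCDF η₁) :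
    P {ω | X ω + E ω ∈ Set.Ioc l u} = ENNReal.ofReal Z ∧
      0 < Z ∧
      (∫ ω in {ω | X ω + E ω ∈ Set.Ioc l u}, X ω ∂P) /
          (P {ω | X ω + E ω ∈ Set.Ioc l u}).toReal =
        m + s ^ 2 / σ * (stdNormalPDF η₁ - stdNormalPDF η₂) / Z := by
  have hSpos : (0:ℝ) < s ^ 2 + n ^ 2 := by positivity
  have hσpos : 0 < σ := hσdef ▸ Real.sqrt_pos.mpr hSpos
  have hσsq : σ ^ 2 = s ^ 2 + n ^ 2 := hσdef ▸ Real.sq_sqrt hSpos.le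
  have hηlt : η₁ < η₂ := by
    rw [hη₁, hη₂]
    gcongr <;> linarith
  have hZpos : 0 < Z := hZ ▸ cdf_diff_pos hηlt
  set A : Set Ω := {ω | X ω + E ω ∈ Set.Ioc l u} with hA
  -- The two key computations
  have hkey : P A = ENNReal.ofReal Z ∧
      (∫ ω in A, X ω ∂P) = m * Z + s ^ 2 / σ * (stdNormalPDF η₁ - stdNormalPDF η₂) := by
    rcases eq_or_lt_of_le hn with hn0 | hnpos
    · -- degenerate case n = 0
      have hσs : σ = s := by
        rw [hσdef, ← hn0, show s ^ 2 + (0:ℝ) ^ 2 = s ^ 2 by norm_num, Real.sqrt_sq hs.le]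
      have hmapE : P.map E = Measure.dirac 0 := by
        rw [hEd, ← hn0, show ((0:ℝ) ^ 2).toNNReal = 0 by norm_num, gaussianReal_zero_var]
      have hE0 : ∀ᵐ ω ∂P, E ω = 0 := by
        rw [ae_iff]
        have hset : {ω | ¬E ω = 0} = E ⁻¹' {(0:ℝ)}ᶜ := by ext ω; simp
        rw [hset, ← Measure.map_apply hE (measurableSet_singleton (0:ℝ)).compl, hmapE,
          Measure.dirac_apply' _ (measurableSet_singleton (0:ℝ)).compl]
        simp
      have hAE : A =ᵐ[P] (X ⁻¹' Set.Ioc l u) := by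
        rw [Filter.eventuallyEq_set]
        filter_upwards [hE0] with ω hω
        simp [hA, Set.mem_preimage, hω]
      have hPA1 : P A = ENNReal.ofReal Z := by
        rw [measure_congr hAE, ← Measure.map_apply hX measurableSet_Ioc, hXd,
          gaussianReal_apply_eq_integral _ (var_ne_zero hs), ← npdf_eq_gaussianPDFReal hs,
          cdf_Ioc hs m l u hlu.le, hZ, hη₁, hη₂, hσs]
      have hNum1 : (∫ ω in A, X ω ∂P) =
          m * Z + s ^ 2 / σ * (stdNormalPDF η₁ - stdNormalPDF η₂) := by
        rw [setIntegral_congr_set hAE]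
        have hstep := setIntegral_map (μ := P) (g := X) (f := fun y : ℝ => y)
          (s := Set.Ioc l u) measurableSet_Ioc aestronglyMeasurable_id hX.aemeasurable
        rw [← hstep, hXd, ← integral_indicator measurableSet_Ioc,
          integral_gaussianReal' hs m (Set.indicator (Set.Ioc l u) (fun y => y))]
        have hind : ∀ y : ℝ, npdf m s y * Set.indicator (Set.Ioc l u) (fun y => y) y =
            Set.indicator (Set.Ioc l u) (fun y => y * npdf m s y) y := by
          intro y
          rw [Set.indicator_apply, Set.indicator_apply]
          split_ifs
          · simp [mul_comm]
          · simp
        simp_rw [hind]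
        rw [integral_indicator measurableSet_Ioc]
        have hsplit : ∀ y : ℝ, y * npdf m s y = (y - m) * npdf m s y + m * npdf m s y := by
          intro y; ring
        simp_rw [hsplit]
        rw [integral_add ((integrable_sub_mul_npdf hs m m).integrableOn)
          (((integrable_npdf m hs).const_mul m).integrableOn),
          MeasureTheory.integral_const_mul, moment_Ioc hs m l u hlu.le,
          cdf_Ioc hs m l u hlu.le, hZ, hη₁, hη₂, hσs]
        have : s * (stdNormalPDF ((l - m) / s) - stdNormalPDF ((u - m) / s)) =
            s ^ 2 / s * (stdNormalPDF ((l - m) / s) - stdNormalPDF ((u - m) / s)) := by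
          rw [sq, mul_div_assoc, div_self hs.ne', mul_one]
        rw [this]
        ring
      exact ⟨hPA1, hNum1⟩
    · -- main case n > 0
      have hXE : Measurable (fun ω => (X ω, E ω)) := hX.prodMk hE
      have hmap : P.map (fun ω => (X ω, E ω)) =
          (gaussianReal m (s ^ 2).toNNReal).prod (gaussianReal 0 (n ^ 2).toNNReal) := by
        rw [← hXd, ← hEd]
        exact (indepFun_iff_map_prod_eq_prod_map_map hX.aemeasurable hE.aemeasurable).mp hInd
      have hS₀ : MeasurableSet {q : ℝ × ℝ | q.1 + q.2 ∈ Set.Ioc l u} :=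
        (measurable_fst.add measurable_snd) measurableSet_Ioc
      have hApre : A = (fun ω => (X ω, E ω)) ⁻¹' {q : ℝ × ℝ | q.1 + q.2 ∈ Set.Ioc l u} := rfl
      have hAmeas : MeasurableSet A := hXE hS₀
      -- total mass
      have htot1 : ∫ p : ℝ × ℝ, Set.indicator {q : ℝ × ℝ | q.1 + q.2 ∈ Set.Ioc l u}
          (fun q => (1:ℝ)) p
          ∂((gaussianReal m (s ^ 2).toNNReal).prod (gaussianReal 0 (n ^ 2).toNNReal)) = Z := by
        rw [total_eq hs hnpos m l u (fun _ => (1:ℝ)) measurable_const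
          (by simpa using integrable_npdf m hs)]
        rw [setIntegral_congr_fun measurableSet_Ioc
          (fun y _ => by simp only [one_mul]; exact conv_npdf hs hnpos m y :
            ∀ y ∈ Set.Ioc l u, (∫ x, 1 * (npdf m s x * npdf 0 n (y - x))) =
              npdf m (Real.sqrt (s ^ 2 + n ^ 2)) y)]
        rw [← hσdef, cdf_Ioc hσpos m l u hlu.le, hZ, hη₁, hη₂]
      have hPA1 : P A = ENNReal.ofReal Z := by
        rw [hApre, ← Measure.map_apply hXE hS₀, hmap]
        have hfin : ((gaussianReal m (s ^ 2).toNNReal).prod (gaussianReal 0 (n ^ 2).toNNReal))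
            {q : ℝ × ℝ | q.1 + q.2 ∈ Set.Ioc l u} ≠ ⊤ := measure_ne_top _ _
        have htr : (((gaussianReal m (s ^ 2).toNNReal).prod (gaussianReal 0 (n ^ 2).toNNReal))
            {q : ℝ × ℝ | q.1 + q.2 ∈ Set.Ioc l u}).toReal = Z := by
          exact (integral_indicator_one hS₀).symm.trans htot1
        rw [← htr, ENNReal.ofReal_toReal hfin]
      have hNum1 : (∫ ω in A, X ω ∂P) =
          m * Z + s ^ 2 / σ * (stdNormalPDF η₁ - stdNormalPDF η₂) := by
        have hindAe : A.indicator X = fun ω =>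
            Set.indicator {q : ℝ × ℝ | q.1 + q.2 ∈ Set.Ioc l u} (fun q => q.1) (X ω, E ω) := by
          funext ω
          rw [Set.indicator_apply, Set.indicator_apply]
          rfl
        rw [← integral_indicator hAmeas, hindAe,
          ← integral_map hXE.aemeasurable ((measurable_fst.indicator hS₀).aestronglyMeasurable),
          hmap, total_eq hs hnpos m l u (fun x => x) measurable_id
            (integrable_abs_mul_npdf hs m)]
        rw [setIntegral_congr_fun measurableSet_Ioc
          (fun y _ => conv_npdf_mul hs hnpos m y :
            ∀ y ∈ Set.Ioc l u, (∫ x, x * (npdf m s x * npdf 0 n (y - x))) =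
              (m + s ^ 2 / (s ^ 2 + n ^ 2) * (y - m)) *
                npdf m (Real.sqrt (s ^ 2 + n ^ 2)) y)]
        rw [← hσdef]
        have hsplit : ∀ y : ℝ, (m + s ^ 2 / (s ^ 2 + n ^ 2) * (y - m)) * npdf m σ y =
            m * npdf m σ y + s ^ 2 / (s ^ 2 + n ^ 2) * ((y - m) * npdf m σ y) := by
          intro y; ring
        simp_rw [hsplit]
        rw [integral_add (((integrable_npdf m hσpos).const_mul m).integrableOn)
          (((integrable_sub_mul_npdf hσpos m m).const_mul
            (s ^ 2 / (s ^ 2 + n ^ 2))).integrableOn),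
          MeasureTheory.integral_const_mul, MeasureTheory.integral_const_mul,
          moment_Ioc hσpos m l u hlu.le, cdf_Ioc hσpos m l u hlu.le]
        have hcoef : s ^ 2 / (s ^ 2 + n ^ 2) * σ = s ^ 2 / σ := by
          rw [← hσsq]
          field_simp
        rw [hZ, hη₁, hη₂, ← mul_assoc, hcoef]
      exact ⟨hPA1, hNum1⟩
  obtain ⟨hPA, hNum⟩ := hkey
  refine ⟨hPA, hZpos, ?_⟩
  rw [hPA, hNum, ENNReal.toReal_ofReal hZpos.le]
  field_simp

/-- Let `X ~ N(m, s²)` (`s > 0`) and `E ~ N(0, n²)` (`n ≥ 0`) be independent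
and `Y = X + E`.  For `l < u`, with `η₁ = (l−m)/√(s²+n²)`, `η₂ = (u−m)/√(s²+n²)` and
`Z = Φ(η₂) − Φ(η₁)`, one has `P(Y ∈ (l, u]) = Z > 0` and
`E[X | Y ∈ (l, u]] = m + (s²/√(s²+n²)) (φ(η₁) − φ(η₂))/Z`. -/
theorem stmt13 {Ω : Type*} [MeasurableSpace Ω] (P : Measure Ω) [IsProbabilityMeasure P]
    (X E : Ω → ℝ) (hX : Measurable X) (hE : Measurable E)
    (m s n : ℝ) (hs : 0 < s) (hn : 0 ≤ n)
    (hXd : P.map X = gaussianReal m (s ^ 2).toNNReal)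
    (hEd : P.map E = gaussianReal 0 (n ^ 2).toNNReal)
    (hInd : IndepFun X E P)
    (l u : ℝ) (hlu : l < u) :
    let Y : Ω → ℝ := fun ω => X ω + E ω
    let η₁ : ℝ := (l - m) / Real.sqrt (s ^ 2 + n ^ 2)
    let η₂ : ℝ := (u - m) / Real.sqrt (s ^ 2 + n ^ 2)
    let Z : ℝ := stdNormalCDF η₂ - stdNormalCDF η₁
    let A : Set Ω := {ω | Y ω ∈ Set.Ioc l u}
    P A = ENNReal.ofReal Z ∧ 0 < Z ∧
      (∫ ω in A, X ω ∂P) / (P A).toReal =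
        m + (s ^ 2 / Real.sqrt (s ^ 2 + n ^ 2)) * (stdNormalPDF η₁ - stdNormalPDF η₂) / Z := by
  intro Y η₁ η₂ Z A
  exact stmt13_aux P X E hX hE m s n hs hn hXd hEd hInd l u hlu
    (Real.sqrt (s ^ 2 + n ^ 2)) η₁ η₂ Z rfl rfl rfl rfl
end
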